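/- For every r ≥ 1 and n ∈ ℕ, one has H^{(r)}_{n,q}(1|λ) − λ · H^{(r)}_{n,q}(λ) = (1 − λ) · H^{(r−1)}_{n,q}(λ), where H^{(r)}_{n,q}(1|λ) denotes the evaluation of H^{(r)}_{n,q}(x|λ) at x = 1 (for r = 1 note H^{(0)}_{n,q}(λ) = δ_{0,n}). -/

import Mathlib

open Finset Polynomial

/-- The `q`-integer `[n]_q = (1 - q^n)/(1 - q)` viewed in `ℂ`. -/
noncomputable def qInt (q : ℝ) (n : ℕ) : ℂ := (1 - (q : ℂ) ^ n) / (1 - (q : ℂ))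

/-- The `q`-factorial `[n]_q! = ∏_{j=1}^n [j]_q`. -/
noncomputable def qFact (q : ℝ) (n : ℕ) : ℂ := ∏ j ∈ Finset.range n, qInt q (j + 1)

/-- The `q`-binomial coefficient `[n]_q!/([k]_q! [n-k]_q!)`. -/
noncomputable def qBinom (q : ℝ) (n k : ℕ) : ℂ := qFact q n / (qFact q k * qFact q (n - k))

/-- The formal `q`-exponential `e_q(t) = ∑ t^n/[n]_q!` in `ℂ[x][[t]]`. -/
noncomputable def qExp (q : ℝ) : PowerSeries (Polynomial ℂ) :=
  PowerSeries.mk fun n => Polynomial.C (1 / qFact q n)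

/-- The formal series `e_q(xt) = ∑ x^n t^n/[n]_q!` in `ℂ[x][[t]]`. -/
noncomputable def qExpX (q : ℝ) : PowerSeries (Polynomial ℂ) :=
  PowerSeries.mk fun n => Polynomial.C (1 / qFact q n) * Polynomial.X ^ n

/-- `H : ℕ → ℂ[x]` is the family of order-`r` `q`-Frobenius-Euler polynomials
`H^{(r)}_{n,q}(x|λ)`:
`(∑ H_n t^n/[n]_q!) ⬝ (e_q(t) - λ)^r = (1 - λ)^r e_q(xt)` in `ℂ[x][[t]]`. -/
def IsqFrobeniusEulerOrder (q : ℝ) (lam : ℂ) (r : ℕ) (H : ℕ → Polynomial ℂ) : Prop :=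
  (PowerSeries.mk fun n => Polynomial.C (1 / qFact q n) * H n) *
      (qExp q - PowerSeries.C (R := Polynomial ℂ) (Polynomial.C lam)) ^ r =
    PowerSeries.C (R := Polynomial ℂ) (Polynomial.C ((1 - lam) ^ r)) * qExpX q

lemma qFact_ne_zero (q : ℝ) (hq0 : 0 < q) (hq1 : q < 1) (n : ℕ) : qFact q n ≠ 0 := by
  unfold qFact
  rw [Finset.prod_ne_zero_iff]
  intro j _
  unfold qInt
  apply div_ne_zero
  · have h : q ^ (j + 1) < 1 := pow_lt_one₀ hq0.le hq1 (Nat.succ_ne_zero j)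
    have h2 : ((1 - q ^ (j + 1) : ℝ) : ℂ) ≠ 0 :=
      Complex.ofReal_ne_zero.mpr (sub_ne_zero.mpr (ne_of_lt h).symm)
    push_cast at h2
    exact h2
  · have h2 : ((1 - q : ℝ) : ℂ) ≠ 0 :=
      Complex.ofReal_ne_zero.mpr (sub_ne_zero.mpr (ne_of_lt hq1).symm)
    push_cast at h2
    exact h2


/-- For `r ≥ 1`, `H^{(r)}_{n,q}(1|λ) - λ H^{(r)}_{n,q}(λ) = (1-λ) H^{(r-1)}_{n,q}(λ)`. -/
theorem qFrobeniusEulerOrder_eval_one_sub_lam_mul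
    (q : ℝ) (hq0 : 0 < q) (hq1 : q < 1) (lam : ℂ) (hlam : lam ≠ 1)
    (r : ℕ) (hr : 1 ≤ r)
    (Hr : ℕ → Polynomial ℂ) (hHr : IsqFrobeniusEulerOrder q lam r Hr)
    (Hrm : ℕ → Polynomial ℂ) (hHrm : IsqFrobeniusEulerOrder q lam (r - 1) Hrm) (n : ℕ) :
    (Hr n).eval 1 - lam * (Hr n).eval 0 = (1 - lam) * (Hrm n).eval 0 := by
  classical
  set E : PowerSeries ℂ := PowerSeries.mk fun m => 1 / qFact q m with hE
  set P : PowerSeries ℂ := E - PowerSeries.C (R := ℂ) lam with hPdef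
  have hmap : ∀ (a : ℂ) (f : ℕ → Polynomial ℂ),
      PowerSeries.map (Polynomial.evalRingHom a) (PowerSeries.mk f)
        = PowerSeries.mk fun m => (f m).eval a := by
    intro a f
    ext m
    simp [PowerSeries.coeff_map]
  have hmapE : ∀ a : ℂ, PowerSeries.map (Polynomial.evalRingHom a) (qExp q) = E := by
    intro a
    rw [qExp, hmap]
    ext m
    simp [hE, PowerSeries.coeff_mk, one_div]
  have hmapC : ∀ (a c : ℂ),
      PowerSeries.map (Polynomial.evalRingHom a)
        (PowerSeries.C (R := Polynomial ℂ) (Polynomial.C c)) = PowerSeries.C (R := ℂ) c := by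
    intro a c
    ext m
    simp [PowerSeries.coeff_map, PowerSeries.coeff_C]
  have hmapX1 : PowerSeries.map (Polynomial.evalRingHom (1:ℂ)) (qExpX q) = E := by
    rw [qExpX, hmap]
    ext m
    simp [hE, PowerSeries.coeff_mk, one_div]
  have hmapX0 : PowerSeries.map (Polynomial.evalRingHom (0:ℂ)) (qExpX q) = 1 := by
    rw [qExpX, hmap]
    ext m
    cases m with
    | zero => simp [qFact, PowerSeries.coeff_one]
    | succ k => simp [PowerSeries.coeff_one]
  -- hypotheses mapped
  have eq1 : (PowerSeries.mk fun m => (1 / qFact q m) * (Hr m).eval 1) * P ^ r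
      = PowerSeries.C (R := ℂ) ((1 - lam) ^ r) * E := by
    have := congrArg (PowerSeries.map (Polynomial.evalRingHom (1:ℂ))) hHr
    simpa [map_mul, map_pow, map_sub, hmap, hmapE, hmapC, hmapX1] using this
  have eq0 : (PowerSeries.mk fun m => (1 / qFact q m) * (Hr m).eval 0) * P ^ r
      = PowerSeries.C (R := ℂ) ((1 - lam) ^ r) := by
    have := congrArg (PowerSeries.map (Polynomial.evalRingHom (0:ℂ))) hHr
    simpa [map_mul, map_pow, map_sub, hmap, hmapE, hmapC, hmapX0] using this
  have eqm : (PowerSeries.mk fun m => (1 / qFact q m) * (Hrm m).eval 0) * P ^ (r - 1)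
      = PowerSeries.C (R := ℂ) ((1 - lam) ^ (r - 1)) := by
    have := congrArg (PowerSeries.map (Polynomial.evalRingHom (0:ℂ))) hHrm
    simpa [map_mul, map_pow, map_sub, hmap, hmapE, hmapC, hmapX0] using this
  have h1lam : (1 : ℂ) - lam ≠ 0 := sub_ne_zero.mpr (Ne.symm hlam)
  have hP : P ≠ 0 := by
    intro h
    have := congrArg (PowerSeries.constantCoeff (R := ℂ)) h
    rw [hPdef] at this
    simp [hE, qFact] at this
    exact h1lam (by simpa [sub_eq_zero] using this)
  set A := PowerSeries.mk fun m => (1 / qFact q m) * (Hr m).eval 1 with hA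
  set B := PowerSeries.mk fun m => (1 / qFact q m) * (Hr m).eval 0 with hB
  set G := PowerSeries.mk fun m => (1 / qFact q m) * (Hrm m).eval 0 with hG
  have hrr : r - 1 + 1 = r := Nat.succ_pred_eq_of_pos hr
  have key : A - PowerSeries.C (R := ℂ) lam * B = PowerSeries.C (R := ℂ) (1 - lam) * G := by
    apply mul_right_cancel₀ (pow_ne_zero r hP)
    have lhs : (A - PowerSeries.C (R := ℂ) lam * B) * P ^ r
        = PowerSeries.C (R := ℂ) ((1 - lam) ^ r) * (E - PowerSeries.C (R := ℂ) lam) := by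
      rw [sub_mul, mul_assoc, eq1, eq0]
      ring
    have rhs : (PowerSeries.C (R := ℂ) (1 - lam) * G) * P ^ r
        = PowerSeries.C (R := ℂ) ((1 - lam) ^ r) * (E - PowerSeries.C (R := ℂ) lam) := by
      have hpow : P ^ r = P ^ (r - 1) * P := by conv_lhs => rw [← hrr, pow_succ]
      calc (PowerSeries.C (R := ℂ) (1 - lam) * G) * P ^ r
          = PowerSeries.C (R := ℂ) (1 - lam) * (G * P ^ (r - 1)) * P := by
            rw [hpow]; ring
        _ = PowerSeries.C (R := ℂ) (1 - lam) * PowerSeries.C (R := ℂ) ((1 - lam) ^ (r - 1)) * P := by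
            rw [eqm]
        _ = PowerSeries.C (R := ℂ) ((1 - lam) ^ r) * (E - PowerSeries.C (R := ℂ) lam) := by
            rw [← map_mul, ← pow_succ', hrr, hPdef]
    rw [lhs, rhs]
  have hc := congrArg (PowerSeries.coeff (R := ℂ) n) key
  rw [hA, hB, hG, map_sub, PowerSeries.coeff_C_mul, PowerSeries.coeff_C_mul,
    PowerSeries.coeff_mk, PowerSeries.coeff_mk, PowerSeries.coeff_mk] at hc
  have hqf : (1 : ℂ) / qFact q n ≠ 0 := one_div_ne_zero (qFact_ne_zero q hq0 hq1 n)
  exact mul_left_cancel₀ hqf (by linear_combination hc)
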